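/- Let V be the Volterra operator on S with a_{ki} = −1 for all i > k. If x ∈ S has finite support with maximum element m₀, then Vⁿ(x) converges in ℓ¹-norm to the basis vector e_{m₀}. -/

import Mathlib

open Filter Topology

theorem stmt_14 (V : (ℕ → ℝ) → (ℕ → ℝ))
    (hV : ∀ x k, V x k = x k ^ 2 + 2 * x k * ∑ i ∈ Finset.range k, x i)
    (x : ℕ → ℝ) (hx : (∀ k, 0 ≤ x k) ∧ Summable x ∧ ∑' k, x k = 1)
    (m₀ : ℕ) (hm₀ : x m₀ ≠ 0) (hmax : ∀ i, x i ≠ 0 → i ≤ m₀) :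
    Tendsto (fun n => ∑' k, |(V^[n] x) k - (if k = m₀ then (1 : ℝ) else 0)|)
      atTop (𝓝 0) := by
  obtain ⟨hpos, hsum, htot⟩ := hx
  set P : ℕ → ℝ := fun k => ∑ i ∈ Finset.range k, x i with hPdef
  have hP0 : P 0 = 0 := Finset.sum_range_zero x
  have key : ∀ n k, V^[n] x k = (P (k+1))^(2^n) - (P k)^(2^n) := by
    intro n
    induction n with
    | zero =>
      intro k
      simp [hPdef, Finset.sum_range_succ]
    | succ n ih =>
      intro k
      have hPn : ∀ m, ∑ i ∈ Finset.range m, V^[n] x i = (P m)^(2^n) := by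
        intro m
        have : ∑ i ∈ Finset.range m, V^[n] x i
            = ∑ i ∈ Finset.range m, ((P (i+1))^(2^n) - (P i)^(2^n)) :=
          Finset.sum_congr rfl fun i _ => ih i
        rw [this, Finset.sum_range_sub (fun i => (P i)^(2^n)), hP0,
          zero_pow (by positivity), sub_zero]
      have hc : ∀ c : ℝ, c^(2^(n+1)) = (c^(2^n))^2 := fun c => by
        rw [pow_succ, pow_mul]
      rw [Function.iterate_succ_apply', hV, hPn, ih k, hc, hc]
      ring
  have hzero : ∀ i, m₀ < i → x i = 0 := by
    intro i hi
    by_contra h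
    exact absurd (hmax i h) (not_le.mpr hi)
  have hPk : ∀ k, m₀ + 1 ≤ k → P k = 1 := by
    intro k hk
    rw [← htot]
    exact (tsum_eq_sum (fun b hb => hzero b (by
      simp only [Finset.mem_range, not_lt] at hb; omega))).symm
  have hPS : P (m₀ + 1) = P m₀ + x m₀ := Finset.sum_range_succ x m₀
  have hxm : 0 < x m₀ := lt_of_le_of_ne (hpos m₀) (Ne.symm hm₀)
  have ha0 : 0 ≤ P m₀ := Finset.sum_nonneg fun i _ => hpos i
  have ha1 : P m₀ < 1 := by
    have := hPk (m₀ + 1) le_rfl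
    rw [hPS] at this; linarith
  have hPnn : ∀ k, 0 ≤ P k := fun k => Finset.sum_nonneg fun i _ => hpos i
  have hPmono : ∀ k, P k ≤ P (k+1) := by
    intro k
    simp only [hPdef]
    rw [Finset.sum_range_succ]
    linarith [hpos k]
  have Sn : ∀ n, ∑' k, |(V^[n] x) k - (if k = m₀ then (1 : ℝ) else 0)|
      = 2 * (P m₀)^(2^n) := by
    intro n
    have heq : ∑' k, |(V^[n] x) k - (if k = m₀ then (1 : ℝ) else 0)|
        = ∑ k ∈ Finset.range (m₀ + 1), |(V^[n] x) k - (if k = m₀ then (1 : ℝ) else 0)| := by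
      apply tsum_eq_sum
      intro b hb
      simp only [Finset.mem_range, not_lt] at hb
      have hbne : b ≠ m₀ := by omega
      rw [key, hPk b (by omega), hPk (b+1) (by omega), if_neg hbne]
      simp
    rw [heq, Finset.sum_range_succ]
    have hlast : |(V^[n] x) m₀ - (if m₀ = m₀ then (1 : ℝ) else 0)| = (P m₀)^(2^n) := by
      rw [key, hPk (m₀+1) le_rfl, if_pos rfl, one_pow]
      rw [show (1 : ℝ) - P m₀ ^ 2 ^ n - 1 = -(P m₀ ^ 2 ^ n) by ring, abs_neg,
        abs_of_nonneg (by positivity)]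
    have hrest : ∑ k ∈ Finset.range m₀, |(V^[n] x) k - (if k = m₀ then (1 : ℝ) else 0)|
        = (P m₀)^(2^n) := by
      have : ∀ k ∈ Finset.range m₀, |(V^[n] x) k - (if k = m₀ then (1 : ℝ) else 0)|
          = (P (k+1))^(2^n) - (P k)^(2^n) := by
        intro k hk
        simp only [Finset.mem_range] at hk
        rw [if_neg (by omega), sub_zero, key,
          abs_of_nonneg (by
            have := pow_le_pow_left₀ (hPnn k) (hPmono k) (2^n)
            linarith)]
      rw [Finset.sum_congr rfl this, Finset.sum_range_sub (fun i => (P i)^(2^n)),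
        hP0, zero_pow (by positivity), sub_zero]
    rw [hlast, hrest]; ring
  have : (fun n => ∑' k, |(V^[n] x) k - (if k = m₀ then (1 : ℝ) else 0)|)
      = fun n => 2 * (P m₀)^(2^n) := funext Sn
  rw [this]
  have h1 : Tendsto (fun n : ℕ => (P m₀)^(2^n)) atTop (𝓝 0) :=
    (tendsto_pow_atTop_nhds_zero_of_lt_one ha0 ha1).comp
      (tendsto_pow_atTop_atTop_of_one_lt (by norm_num))
  have := h1.const_mul (2 : ℝ)
  simpa using this
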